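/- Let G be a finite connected simple graph containing a universal vertex. If G is complete then μt(G) = μ(G) = n(G), and if G is not complete then μt(G) = μ(G) = n(G) − 1. In particular every graph with a universal vertex satisfies μ(G) = μt(G). -/

import Mathlib

open SimpleGraph

/-- Vertices `x` and `y` are `X`-visible in `G`: some shortest `x,y`-path has
no internal vertex in `X`. -/
def Visible {V : Type*} (G : SimpleGraph V) (X : Set V) (x y : V) : Prop :=
  ∃ p : G.Walk x y, p.length = G.dist x y ∧ ∀ v ∈ p.support, v ∈ X → v = x ∨ v = y

/-- `X` is a mutual-visibility set of `G`: every two vertices of `X` are `X`-visible. -/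
def IsMVSet {V : Type*} (G : SimpleGraph V) (X : Set V) : Prop :=
  ∀ x ∈ X, ∀ y ∈ X, Visible G X x y

/-- `X` is a total mutual-visibility set of `G`: every two vertices of `G` are
`X`-visible. -/
def IsTMVSet {V : Type*} (G : SimpleGraph V) (X : Set V) : Prop :=
  ∀ x y : V, Visible G X x y

/-- The mutual-visibility number of `G`: the maximum cardinality of a
mutual-visibility set. -/
noncomputable def mu {V : Type*} (G : SimpleGraph V) : ℕ :=
  sSup {n | ∃ X : Set V, IsMVSet G X ∧ X.ncard = n}

/-- The total mutual-visibility number of `G`: the maximum cardinality of a total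
mutual-visibility set. -/
noncomputable def muT {V : Type*} (G : SimpleGraph V) : ℕ :=
  sSup {n | ∃ X : Set V, IsTMVSet G X ∧ X.ncard = n}

/-- A feasible total mutual-visibility set: a total mutual-visibility set `S` such that
any two adjacent vertices of `S` have a common neighbor outside `S`. -/
def IsFeasibleTMVSet {V : Type*} (G : SimpleGraph V) (S : Set V) : Prop :=
  IsTMVSet G S ∧ ∀ x ∈ S, ∀ y ∈ S, G.Adj x y → ∃ z ∉ S, G.Adj x z ∧ G.Adj y z

/-- The strong product of two simple graphs. -/
def strongProd {α β : Type*} (G : SimpleGraph α) (H : SimpleGraph β) :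
    SimpleGraph (α × β) where
  Adj x y := (G.Adj x.1 y.1 ∧ x.2 = y.2) ∨ (x.1 = y.1 ∧ H.Adj x.2 y.2) ∨
    (G.Adj x.1 y.1 ∧ H.Adj x.2 y.2)
  symm := by
    constructor
    rintro ⟨a, b⟩ ⟨c, d⟩ (⟨h1, h2⟩ | ⟨h1, h2⟩ | ⟨h1, h2⟩)
    · exact Or.inl ⟨h1.symm, h2.symm⟩
    · exact Or.inr (Or.inl ⟨h1.symm, h2.symm⟩)
    · exact Or.inr (Or.inr ⟨h1.symm, h2.symm⟩)
  loopless := by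
    constructor
    rintro ⟨a, b⟩ (⟨h, _⟩ | ⟨_, h⟩ | ⟨h, _⟩)
    · exact G.irrefl h
    · exact H.irrefl h
    · exact G.irrefl h

/-- The iterated (associative) strong product of a finite family of graphs:
two tuples are adjacent iff they are distinct and agree or are adjacent in every
coordinate. -/
def strongProdPi {k : ℕ} {V : Fin k → Type*} (G : ∀ i, SimpleGraph (V i)) :
    SimpleGraph (∀ i, V i) where
  Adj x y := x ≠ y ∧ ∀ i, x i = y i ∨ (G i).Adj (x i) (y i)
  symm := by
    constructor
    rintro x y ⟨hne, h⟩
    exact ⟨hne.symm, fun i => (h i).imp Eq.symm fun hh => (G i).adj_symm hh⟩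
  loopless := ⟨fun x h => h.1 rfl⟩

/-- A universal vertex: adjacent to all other vertices. -/
def IsUniversal {V : Type*} (G : SimpleGraph V) (v : V) : Prop :=
  ∀ u : V, u ≠ v → G.Adj v u

/-- A cut vertex: its removal disconnects the graph. -/
def IsCutVertex {V : Type*} (G : SimpleGraph V) (v : V) : Prop :=
  ¬ (G.induce ({v}ᶜ : Set V)).Preconnected

/-- An induced path: a path with no chords between its vertices. -/
def IsInducedPath {V : Type*} (G : SimpleGraph V) {u v : V} (p : G.Walk u v) : Prop :=
  p.IsPath ∧ ∀ a b : V, a ∈ p.support → b ∈ p.support → G.Adj a b → s(a, b) ∈ p.edges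

/-- A block graph: a connected graph in which every pair of vertices is joined
by a unique induced path. -/
def IsBlockGraph {V : Type*} (G : SimpleGraph V) : Prop :=
  G.Connected ∧ ∀ u v : V, ∃! p : G.Walk u v, IsInducedPath G p

/-- A convex set of vertices: every shortest path of `G` between two of its
vertices stays inside the set. -/
def IsConvexSet {V : Type*} (G : SimpleGraph V) (A : Set V) : Prop :=
  ∀ x ∈ A, ∀ y ∈ A, ∀ p : G.Walk x y, p.length = G.dist x y → ∀ v ∈ p.support, v ∈ A

/-- A cactus graph: a connected graph in which every edge lies in at most one cycle,
i.e. two cycles sharing an edge have the same edge set. -/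
def IsCactus {V : Type*} (G : SimpleGraph V) : Prop :=
  G.Connected ∧ ∀ (v : V) (p q : G.Walk v v), p.IsCycle → q.IsCycle →
    ∀ e, e ∈ p.edges → e ∈ q.edges → ∀ e', e' ∈ p.edges ↔ e' ∈ q.edges

/-- A cograph: obtained from a single vertex by repeatedly adding twins, i.e. there is
an enumeration of the vertices in which every vertex except the first is, at the
moment of its addition, a (true or false) twin of some earlier vertex in the induced
subgraph on the vertices added so far. -/
def IsCograph {V : Type*} (G : SimpleGraph V) : Prop :=
  ∃ l : List V, l.Nodup ∧ (∀ v : V, v ∈ l) ∧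
    ∀ i : Fin l.length, (i : ℕ) ≠ 0 →
      ∃ j : Fin l.length, (j : ℕ) < (i : ℕ) ∧
        ∀ z ∈ l.take ((i : ℕ) + 1), z ≠ l.get i → z ≠ l.get j →
          (G.Adj (l.get i) z ↔ G.Adj (l.get j) z)

/-- An enabling vertex: a vertex `v` adjacent to every vertex `u` of `G - v` whose
degree in `G - v` is less than `n(G) - 2`. -/
def IsEnabling {V : Type*} [Fintype V] (G : SimpleGraph V) (v : V) : Prop :=
  ∀ u : V, u ≠ v → (G.neighborSet u \ {v}).ncard < Fintype.card V - 2 → G.Adj v u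

section Aux

variable {V : Type*} [Fintype V]

lemma visible_self {G : SimpleGraph V} (X : Set V) (x : V) : Visible G X x x :=
  ⟨SimpleGraph.Walk.nil, by simp [SimpleGraph.dist_self], by simp⟩

lemma visible_of_adj {G : SimpleGraph V} (X : Set V) {x y : V} (h : G.Adj x y) :
    Visible G X x y := by
  refine ⟨SimpleGraph.Walk.cons h SimpleGraph.Walk.nil, ?_, ?_⟩
  · simp [SimpleGraph.dist_eq_one_iff_adj.mpr h]
  · intro v hv _
    simp only [SimpleGraph.Walk.support_cons, SimpleGraph.Walk.support_nil,
      List.mem_cons, List.mem_singleton, List.not_mem_nil, or_false] at hv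
    tauto

lemma mv_ncard_le (G : SimpleGraph V) (X : Set V) : X.ncard ≤ Fintype.card V := by
  simpa [Set.ncard_univ] using Set.ncard_le_ncard (Set.subset_univ X) Set.finite_univ

lemma sSup_eq_of (P : Set V → Prop) (m : ℕ) (hm : ∃ X, P X ∧ X.ncard = m)
    (hub : ∀ n, (∃ X, P X ∧ X.ncard = n) → n ≤ m) :
    sSup {n | ∃ X : Set V, P X ∧ X.ncard = n} = m := by
  refine le_antisymm (csSup_le ⟨m, hm⟩ fun n hn => hub n hn) (le_csSup ⟨m, hub⟩ hm)

end Aux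

section Main

variable {V : Type*} [Fintype V]

lemma not_mvset_univ {G : SimpleGraph V} (hne : G ≠ ⊤) (hG : G.Connected) :
    ¬ IsMVSet G (Set.univ : Set V) := by
  have h : ∃ x y : V, x ≠ y ∧ ¬ G.Adj x y := by
    by_contra h
    push_neg at h
    apply hne
    ext x y
    simp only [SimpleGraph.top_adj]
    exact ⟨fun ha => ha.ne, fun hxy => h x y hxy⟩
  obtain ⟨x, y, hxy, hadj⟩ := h
  intro hmv
  obtain ⟨p, hlen, hsup⟩ := hmv x (Set.mem_univ x) y (Set.mem_univ y)
  have hpos : 0 < G.dist x y := hG.pos_dist_of_ne hxy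
  cases p with
  | nil => exact absurd rfl hxy
  | cons hstep q =>
    rename_i w
    have hw : w ∈ (SimpleGraph.Walk.cons hstep q).support := by
      simp [SimpleGraph.Walk.support_cons, q.start_mem_support]
    rcases hsup w hw (Set.mem_univ w) with hwx | hwy
    · exact G.irrefl (v := x) (hwx ▸ hstep)
    · exact hadj (hwy ▸ hstep)

lemma mvset_compl_univ {G : SimpleGraph V} {v : V} (hv : _root_.IsUniversal G v)
    (hG : G.Connected) : IsTMVSet G ({v}ᶜ : Set V) := by
  intro a b
  by_cases hab : a = b
  · subst hab; exact visible_self _ a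
  by_cases hadj : G.Adj a b
  · exact visible_of_adj _ hadj
  have hva : v ≠ a := by
    rintro rfl
    exact hadj (hv b (Ne.symm hab))
  have hvb : v ≠ b := by
    rintro rfl
    exact hadj ((hv a hab).symm)
  have hav : G.Adj a v := (hv a hva.symm).symm
  have hvb' : G.Adj v b := hv b hvb.symm
  refine ⟨SimpleGraph.Walk.cons hav (SimpleGraph.Walk.cons hvb' SimpleGraph.Walk.nil), ?_, ?_⟩
  · have hle : G.dist a b ≤ 2 := by
      have := SimpleGraph.dist_le
        (SimpleGraph.Walk.cons hav (SimpleGraph.Walk.cons hvb' SimpleGraph.Walk.nil))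
      simpa using this
    have h0 : G.dist a b ≠ 0 := (hG.pos_dist_of_ne hab).ne'
    have h1 : G.dist a b ≠ 1 := fun h => hadj (SimpleGraph.dist_eq_one_iff_adj.mp h)
    simp only [SimpleGraph.Walk.length_cons, SimpleGraph.Walk.length_nil]
    omega
  · intro w hw hwX
    simp only [SimpleGraph.Walk.support_cons, SimpleGraph.Walk.support_nil,
      List.mem_cons, List.mem_singleton] at hw
    rcases hw with rfl | rfl | rfl | h
    · exact Or.inl rfl
    · exact absurd rfl hwX
    · exact Or.inr rfl
    · simp at h

end Main

theorem stmt_2 {V : Type*} [Fintype V] (G : SimpleGraph V) (hG : G.Connected)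
    (hu : ∃ v, _root_.IsUniversal G v) :
    (G = ⊤ → muT G = Fintype.card V ∧ mu G = Fintype.card V) ∧
    (G ≠ ⊤ → muT G = Fintype.card V - 1 ∧ mu G = Fintype.card V - 1) ∧
    mu G = muT G := by
  have hcard_univ : (Set.univ : Set V).ncard = Fintype.card V := by
    rw [Set.ncard_univ, Nat.card_eq_fintype_card]
  have htop : G = ⊤ → muT G = Fintype.card V ∧ mu G = Fintype.card V := by
    rintro rfl
    have htmv : IsTMVSet (⊤ : SimpleGraph V) (Set.univ : Set V) := by
      intro x y
      by_cases hxy : x = y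
      · subst hxy; exact visible_self _ x
      · exact visible_of_adj _ (by simpa [SimpleGraph.top_adj] using hxy)
    constructor
    · exact sSup_eq_of _ _ ⟨Set.univ, htmv, hcard_univ⟩
        (fun n ⟨X, _, hX⟩ => hX ▸ mv_ncard_le (⊤ : SimpleGraph V) X)
    · exact sSup_eq_of _ _ ⟨Set.univ, fun x _ y _ => htmv x y, hcard_univ⟩
        (fun n ⟨X, _, hX⟩ => hX ▸ mv_ncard_le (⊤ : SimpleGraph V) X)
  have hnot : G ≠ ⊤ → muT G = Fintype.card V - 1 ∧ mu G = Fintype.card V - 1 := by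
    intro hne
    obtain ⟨v, hv⟩ := hu
    have hcompl : ({v}ᶜ : Set V).ncard = Fintype.card V - 1 := by
      have := Set.ncard_add_ncard_compl ({v} : Set V)
      rw [Set.ncard_singleton, Nat.card_eq_fintype_card] at this
      omega
    have hub : ∀ (X : Set V), IsMVSet G X → X.ncard ≤ Fintype.card V - 1 := by
      intro X hX
      by_contra hc
      push_neg at hc
      have hle := mv_ncard_le G X
      have hXcard : X.ncard = Fintype.card V := by
        have hpos : 0 < Fintype.card V := by
          have := hG.nonempty
          exact Fintype.card_pos
        omega
      have hXuniv : X = Set.univ := by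
        apply Set.eq_of_subset_of_ncard_le (Set.subset_univ X)
        rw [hcard_univ, hXcard]
      exact not_mvset_univ hne hG (hXuniv ▸ hX)
    have htmv := mvset_compl_univ hv hG
    constructor
    · exact sSup_eq_of _ _ ⟨{v}ᶜ, htmv, hcompl⟩
        (fun n ⟨X, hX, hXc⟩ => hXc ▸ hub X (fun x _ y _ => hX x y))
    · exact sSup_eq_of _ _ ⟨{v}ᶜ, fun x _ y _ => htmv x y, hcompl⟩
        (fun n ⟨X, hX, hXc⟩ => hXc ▸ hub X hX)
  refine ⟨htop, hnot, ?_⟩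
  by_cases h : G = ⊤
  · rw [(htop h).1, (htop h).2]
  · rw [(hnot h).1, (hnot h).2]
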